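/- Suppose R : X → PMF(Y) is a deletion (ε, δ)-DP local randomizer with reference distribution ρ, t-samplable via R_∅ : {0,1}^t → Y, and G : {0,1}^ℓ → {0,1}^t β-fools the density tests of R, where β ≥ 0, δ ≥ 0 and δ + e^ε·β < 1/2. Define the truncated compressed randomizer R̃[G](x)(s) := π̃_x(R_∅(G(s))) / Σ_{s' ∈ {0,1}^ℓ} π̃_x(R_∅(G(s'))). Then for every x ∈ X, the PMF R̃[G](x) and the uniform PMF on {0,1}^ℓ are (ε + 2δ + 2·e^ε·β, δ + β)-close; in particular R̃[G] is a deletion (ε + 2δ + 2·e^ε·β, δ + β)-DP local randomizer. -/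

import Mathlib

open Finset
open MeasureTheory

lemma ind_integrable (w a : ℝ) :
    MeasureTheory.IntegrableOn (fun θ : ℝ => if θ ≤ w then (1:ℝ) else 0) (Set.Ioc 0 a) := by
  have h : (fun θ : ℝ => if θ ≤ w then (1:ℝ) else 0)
      = Set.indicator (Set.Iic w) (fun _ => (1:ℝ)) := by
    funext θ; simp [Set.indicator_apply, Set.mem_Iic]
  rw [h]
  exact (MeasureTheory.integrableOn_const measure_Ioc_lt_top.ne).indicator
    measurableSet_Iic

lemma ind_int (w a : ℝ) (hw : 0 ≤ w) (ha : 0 ≤ a) :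
    ∫ θ in Set.Ioc (0:ℝ) a, (if θ ≤ w then (1:ℝ) else 0) = min w a := by
  have h : (fun θ : ℝ => if θ ≤ w then (1:ℝ) else 0)
      = Set.indicator (Set.Iic w) (fun _ => (1:ℝ)) := by
    funext θ; simp [Set.indicator_apply, Set.mem_Iic]
  rw [h, MeasureTheory.setIntegral_indicator measurableSet_Iic, Set.Ioc_inter_Iic,
    MeasureTheory.setIntegral_const, Real.volume_real_Ioc_of_le (le_min ha hw), smul_eq_mul, mul_one,
    sub_zero, min_comm]

lemma sum_min_eq_integral {S : Type*} [Fintype S] (f : S → ℝ) (hf : ∀ s, 0 ≤ f s)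
    {a : ℝ} (ha : 0 ≤ a) :
    ∑ s, min (f s) a = ∫ θ in Set.Ioc (0:ℝ) a, ((univ.filter fun s => θ ≤ f s).card : ℝ) := by
  have h : ∀ θ : ℝ, ((univ.filter fun s => θ ≤ f s).card : ℝ)
      = ∑ s, if θ ≤ f s then (1:ℝ) else 0 := by
    intro θ; rw [Finset.card_filter]; push_cast; rfl
  simp_rw [h]
  rw [MeasureTheory.integral_finset_sum _ (fun s _ => ind_integrable (f s) a)]
  exact Finset.sum_congr rfl fun s _ => (ind_int (f s) a (hf s) ha).symm

lemma count_integrable {S : Type*} [Fintype S] (f : S → ℝ) (a c : ℝ) :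
    MeasureTheory.IntegrableOn
      (fun θ : ℝ => ((univ.filter fun s => θ ≤ f s).card : ℝ) / c) (Set.Ioc 0 a) := by
  have h : (fun θ : ℝ => ((univ.filter fun s => θ ≤ f s).card : ℝ) / c)
      = fun θ => ∑ s, (if θ ≤ f s then (1:ℝ) else 0) / c := by
    funext θ; rw [← Finset.sum_div, Finset.card_filter]; push_cast; rfl
  rw [h]
  exact MeasureTheory.integrable_finset_sum _ (fun s _ => (ind_integrable (f s) a).div_const c)

lemma comp_bound {S T : Type*} [Fintype S] [Fintype T] (f : S → ℝ) (g : T → ℝ)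
    (hf : ∀ s, 0 ≤ f s) (hg : ∀ r, 0 ≤ g r) {β a E nS nT : ℝ}
    (ha : 0 ≤ a) (haE : a ≤ E)
    (hfool : ∀ θ ∈ Set.Icc (0:ℝ) E,
      |((univ.filter fun s => θ ≤ f s).card : ℝ) / nS -
        ((univ.filter fun r => θ ≤ g r).card : ℝ) / nT| ≤ β) :
    |(∑ s, min (f s) a) / nS - (∑ r, min (g r) a) / nT| ≤ a * β := by
  rw [sum_min_eq_integral f hf ha, sum_min_eq_integral g hg ha,
    ← MeasureTheory.integral_div, ← MeasureTheory.integral_div,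
    ← MeasureTheory.integral_sub (count_integrable f a nS) (count_integrable g a nT)]
  have hvol : (MeasureTheory.volume (Set.Ioc (0:ℝ) a)).toReal = a := by
    rw [Real.volume_Ioc, sub_zero, ENNReal.toReal_ofReal ha]
  calc |∫ θ in Set.Ioc (0:ℝ) a,
        (((univ.filter fun s => θ ≤ f s).card : ℝ) / nS -
          ((univ.filter fun r => θ ≤ g r).card : ℝ) / nT)|
      ≤ β * (MeasureTheory.volume (Set.Ioc (0:ℝ) a)).toReal := by
        rw [← Real.norm_eq_abs]
        refine MeasureTheory.norm_setIntegral_le_of_norm_le_const measure_Ioc_lt_top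
          (fun θ hθ => ?_)
        · rw [Real.norm_eq_abs]
          exact hfool θ ⟨hθ.1.le, hθ.2.trans haE⟩
    _ = a * β := by rw [hvol, mul_comm]

/-- **The truncated compressed randomizer of a deletion (ε,δ)-DP randomizer is deletion
(ε + 2δ + 2e^ε β, δ + β)-DP.** With `π̃_x(y) = min(R(x)(y), e^ε ρ(y))/ρ(y)` and
`R̃[G](x)(s) = π̃_x(R₀(G s)) / ∑_{s'} π̃_x(R₀(G s'))`, for every `x` the PMF `R̃[G](x)`
and the uniform PMF on `{0,1}^ℓ` are `(ε + 2δ + 2e^ε β, δ + β)`-close. -/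
theorem stmt_7 {X Y : Type*} [Fintype X] [Fintype Y] [Nonempty X] [Nonempty Y] [DecidableEq Y]
    (R : X → Y → ℝ) (ρ : Y → ℝ) (ε δ β : ℝ) (t ℓ : ℕ)
    (R₀ : (Fin t → Bool) → Y) (G : (Fin ℓ → Bool) → Fin t → Bool)
    (hRpmf : ∀ x, (∀ y, 0 ≤ R x y) ∧ ∑ y, R x y = 1)
    (hρpmf : (∀ y, 0 ≤ ρ y) ∧ ∑ y, ρ y = 1)
    (hε : 0 ≤ ε) (hδ : 0 ≤ δ) (hβ0 : 0 ≤ β)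
    (hsmall : δ + Real.exp ε * β < 1 / 2)
    (hDP : ∀ x, (∑ y, max (R x y - Real.exp ε * ρ y) 0 ≤ δ) ∧
      (∑ y, max (ρ y - Real.exp ε * R x y) 0 ≤ δ))
    (hsamp : ∀ y, ((univ.filter fun r : Fin t → Bool => R₀ r = y).card : ℝ) / 2 ^ t = ρ y)
    (hfool : ∀ x : X, ∀ θ ∈ Set.Icc (0 : ℝ) (Real.exp ε),
      |((univ.filter fun s : Fin ℓ → Bool =>
            θ ≤ R x (R₀ (G s)) / ρ (R₀ (G s))).card : ℝ) / 2 ^ ℓ -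
        ((univ.filter fun r : Fin t → Bool =>
            θ ≤ R x (R₀ r) / ρ (R₀ r)).card : ℝ) / 2 ^ t| ≤ β) :
    ∀ x : X,
      (∑ s : Fin ℓ → Bool,
        max ((min (R x (R₀ (G s))) (Real.exp ε * ρ (R₀ (G s))) / ρ (R₀ (G s))) /
            (∑ s' : Fin ℓ → Bool,
              min (R x (R₀ (G s'))) (Real.exp ε * ρ (R₀ (G s'))) / ρ (R₀ (G s'))) -
          Real.exp (ε + 2 * δ + 2 * Real.exp ε * β) * ((2 : ℝ) ^ ℓ)⁻¹) 0) ≤ δ + β ∧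
      (∑ s : Fin ℓ → Bool,
        max (((2 : ℝ) ^ ℓ)⁻¹ -
          Real.exp (ε + 2 * δ + 2 * Real.exp ε * β) *
            ((min (R x (R₀ (G s))) (Real.exp ε * ρ (R₀ (G s))) / ρ (R₀ (G s))) /
              (∑ s' : Fin ℓ → Bool,
                min (R x (R₀ (G s'))) (Real.exp ε * ρ (R₀ (G s'))) / ρ (R₀ (G s'))))) 0) ≤
        δ + β := by
  intro x
  obtain ⟨hR0, hR1⟩ := hRpmf x
  obtain ⟨hρ0, hρ1⟩ := hρpmf
  obtain ⟨hDP1, hDP2⟩ := hDP x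
  have hρpos : ∀ v : Fin t → Bool, 0 < ρ (R₀ v) := by
    intro v
    rw [← hsamp (R₀ v)]
    refine div_pos ?_ (by positivity)
    have hv : v ∈ univ.filter fun r : Fin t → Bool => R₀ r = R₀ v := by simp
    exact_mod_cast Finset.card_pos.mpr ⟨v, hv⟩
  set f : (Fin ℓ → Bool) → ℝ := fun s => R x (R₀ (G s)) / ρ (R₀ (G s)) with hfdef
  set g : (Fin t → Bool) → ℝ := fun r => R x (R₀ r) / ρ (R₀ r) with hgdef
  have hf0 : ∀ s, 0 ≤ f s := fun s => div_nonneg (hR0 _) (hρ0 _)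
  have hg0 : ∀ r, 0 ≤ g r := fun r => div_nonneg (hR0 _) (hρ0 _)
  have hπ : ∀ s, min (R x (R₀ (G s))) (Real.exp ε * ρ (R₀ (G s))) / ρ (R₀ (G s))
      = min (f s) (Real.exp ε) := by
    intro s
    rw [← min_div_div_right (hρpos (G s)).le, mul_div_cancel_right₀ _ (hρpos (G s)).ne']
  have hL : (0:ℝ) < 2 ^ ℓ := by positivity
  have hT : (0:ℝ) < 2 ^ t := by positivity
  -- fiberwise computation
  have hfiber : ∀ a : ℝ, 0 ≤ a →
      (∑ r : Fin t → Bool, min (g r) a) / 2 ^ t = ∑ y, min (R x y) (a * ρ y) := by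
    intro a ha
    have h1 : ∑ r : Fin t → Bool, min (g r) a
        = ∑ y, ((univ.filter fun r : Fin t → Bool => R₀ r = y).card : ℝ)
            * min (R x y / ρ y) a := by
      rw [← Finset.sum_fiberwise' univ (fun r => R₀ r) (fun y => min (R x y / ρ y) a)]
      refine Finset.sum_congr rfl fun y _ => ?_
      rw [Finset.sum_const, nsmul_eq_mul]
    rw [h1, Finset.sum_div]
    refine Finset.sum_congr rfl fun y _ => ?_
    rw [mul_div_right_comm, hsamp y]
    rcases (hρ0 y).eq_or_lt with h | h
    · simp [← h, min_eq_right (hR0 y)]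
    · rw [mul_min_of_nonneg _ _ h.le, mul_comm (ρ y) a, mul_comm (ρ y), div_mul_cancel₀ _ h.ne']
  have hQ : ∑ y, min (R x y) (Real.exp ε * ρ y)
      = 1 - ∑ y, max (R x y - Real.exp ε * ρ y) 0 := by
    rw [← hR1, ← Finset.sum_sub_distrib]
    refine Finset.sum_congr rfl fun y _ => ?_
    rcases le_total (R x y) (Real.exp ε * ρ y) with h | h
    · rw [min_eq_left h, max_eq_right (by linarith)]; ring
    · rw [min_eq_right h, max_eq_left (by linarith)]; ring
  set T : ℝ := ∑ y, max (R x y - Real.exp ε * ρ y) 0 with hTdef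
  have hT0 : 0 ≤ T := Finset.sum_nonneg fun y _ => le_max_right _ 0
  set S : ℝ := ∑ s, min (f s) (Real.exp ε) with hSdef
  have hZf : (∑ s' : Fin ℓ → Bool,
      min (R x (R₀ (G s'))) (Real.exp ε * ρ (R₀ (G s'))) / ρ (R₀ (G s'))) = S :=
    Finset.sum_congr rfl fun s _ => hπ s
  set c : ℝ := δ + Real.exp ε * β with hcdef
  have hc0 : 0 ≤ c := by positivity
  have hexp2c : 1 + 2 * c ≤ Real.exp (2 * c) := by
    have := Real.add_one_le_exp (2 * c); linarith
  have hcompA := comp_bound f g hf0 hg0 (le_of_lt (Real.exp_pos ε)) (le_refl (Real.exp ε))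
    (hfool x)
  rw [hfiber _ (Real.exp_pos ε).le, hQ] at hcompA
  obtain ⟨hA1, hA2⟩ := abs_le.mp hcompA
  have hMlb : 1 - c ≤ S / 2 ^ ℓ := by linarith [hDP1]
  have hMub : S / 2 ^ ℓ ≤ Real.exp (2 * c) := by nlinarith [hT0]
  have hee : Real.exp (2 * c) * Real.exp (-(2 * c)) = 1 := by
    rw [← Real.exp_add]; simp
  have hMlb' : Real.exp (-(2 * c)) ≤ S / 2 ^ ℓ := by
    have h1c : Real.exp (-(2 * c)) ≤ 1 - c := by
      nlinarith [Real.exp_pos (-(2 * c)), hexp2c, hee]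
    linarith
  have hSpos : 0 < S := by
    have h1 : 0 < S / 2 ^ ℓ := lt_of_lt_of_le (by linarith [Real.exp_pos (-(2 * c))]) hMlb'
    have h2 := mul_pos h1 hL
    rwa [div_mul_cancel₀ _ hL.ne'] at h2
  have hexps : ε + 2 * δ + 2 * Real.exp ε * β = ε + 2 * c := by rw [hcdef]; ring
  constructor
  · -- first inequality: every term is zero
    refine le_trans (le_of_eq (Finset.sum_eq_zero fun s _ => ?_)) (by positivity)
    rw [hZf, hπ s, hexps]
    refine max_eq_right (sub_nonpos.mpr ?_)
    have hkey : Real.exp ε ≤ Real.exp (ε + 2 * c) * (S / 2 ^ ℓ) := by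
      have h1 := mul_le_mul_of_nonneg_left hMlb' (Real.exp_pos (ε + 2 * c)).le
      have h2 : Real.exp (ε + 2 * c) * Real.exp (-(2 * c)) = Real.exp ε := by
        rw [← Real.exp_add]; ring_nf
      linarith
    rw [div_le_iff₀ hSpos]
    calc min (f s) (Real.exp ε) ≤ Real.exp ε := min_le_right _ _
      _ ≤ Real.exp (ε + 2 * c) * (S / 2 ^ ℓ) := hkey
      _ = Real.exp (ε + 2 * c) * ((2:ℝ) ^ ℓ)⁻¹ * S := by ring
  · -- second inequality
    have hEinv : Real.exp ε * Real.exp (-ε) = 1 := by rw [← Real.exp_add]; simp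
    have hptwise : ∀ s : Fin ℓ → Bool,
        max (((2:ℝ) ^ ℓ)⁻¹ - Real.exp (ε + 2 * δ + 2 * Real.exp ε * β)
          * (min (R x (R₀ (G s))) (Real.exp ε * ρ (R₀ (G s))) / ρ (R₀ (G s)) /
            (∑ s' : Fin ℓ → Bool,
              min (R x (R₀ (G s'))) (Real.exp ε * ρ (R₀ (G s'))) / ρ (R₀ (G s'))))) 0
        ≤ ((2:ℝ) ^ ℓ)⁻¹ * (1 - Real.exp ε * min (f s) (Real.exp (-ε))) := by
      intro s
      rw [hZf, hπ s, hexps]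
      have hm0 : 0 ≤ min (f s) (Real.exp (-ε)) := le_min (hf0 s) (Real.exp_pos _).le
      have hmA : min (f s) (Real.exp (-ε)) ≤ min (f s) (Real.exp ε) := by
        refine min_le_min (le_refl _) (Real.exp_le_exp.mpr (by linarith))
      have hrhs0 : 0 ≤ ((2:ℝ) ^ ℓ)⁻¹ * (1 - Real.exp ε * min (f s) (Real.exp (-ε))) := by
        have h1 : Real.exp ε * min (f s) (Real.exp (-ε)) ≤ 1 := by
          have := mul_le_mul_of_nonneg_left (min_le_right (f s) (Real.exp (-ε)))
            (Real.exp_pos ε).le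
          linarith [hEinv]
        have h2 : (0:ℝ) ≤ ((2:ℝ) ^ ℓ)⁻¹ := by positivity
        exact mul_nonneg h2 (by linarith)
      refine max_le ?_ hrhs0
      -- main estimate
      have hdiv : Real.exp ε / 2 ^ ℓ ≤ Real.exp (ε + 2 * c) / S := by
        rw [div_le_div_iff₀ hL hSpos]
        have h1 : Real.exp ε * S ≤ Real.exp ε * (Real.exp (2 * c) * 2 ^ ℓ) :=
          mul_le_mul_of_nonneg_left ((div_le_iff₀ hL).mp hMub) (Real.exp_pos ε).le
        calc Real.exp ε * S ≤ Real.exp ε * (Real.exp (2 * c) * 2 ^ ℓ) := h1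
          _ = Real.exp (ε + 2 * c) * 2 ^ ℓ := by rw [Real.exp_add]; ring
      have hmain : Real.exp ε / 2 ^ ℓ * min (f s) (Real.exp (-ε))
          ≤ Real.exp (ε + 2 * c) / S * min (f s) (Real.exp ε) :=
        mul_le_mul hdiv hmA hm0 (div_nonneg (Real.exp_pos _).le hSpos.le)
      have heq1 : Real.exp (ε + 2 * c) / S * min (f s) (Real.exp ε)
          = Real.exp (ε + 2 * c) * (min (f s) (Real.exp ε) / S) := by ring
      have heq2 : Real.exp ε / 2 ^ ℓ * min (f s) (Real.exp (-ε))
          = ((2:ℝ) ^ ℓ)⁻¹ * (Real.exp ε * min (f s) (Real.exp (-ε))) := by ring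
      rw [heq1, heq2] at hmain
      have hexpand : ((2:ℝ) ^ ℓ)⁻¹ * (1 - Real.exp ε * min (f s) (Real.exp (-ε)))
          = ((2:ℝ) ^ ℓ)⁻¹ - ((2:ℝ) ^ ℓ)⁻¹ * (Real.exp ε * min (f s) (Real.exp (-ε))) := by
        ring
      rw [hexpand]
      linarith [hmain]
    calc (∑ s : Fin ℓ → Bool,
        max (((2:ℝ) ^ ℓ)⁻¹ - Real.exp (ε + 2 * δ + 2 * Real.exp ε * β)
          * (min (R x (R₀ (G s))) (Real.exp ε * ρ (R₀ (G s))) / ρ (R₀ (G s)) /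
            (∑ s' : Fin ℓ → Bool,
              min (R x (R₀ (G s'))) (Real.exp ε * ρ (R₀ (G s'))) / ρ (R₀ (G s'))))) 0)
        ≤ ∑ s : Fin ℓ → Bool,
            ((2:ℝ) ^ ℓ)⁻¹ * (1 - Real.exp ε * min (f s) (Real.exp (-ε))) :=
          Finset.sum_le_sum fun s _ => hptwise s
      _ = 1 - Real.exp ε * ((∑ s : Fin ℓ → Bool, min (f s) (Real.exp (-ε))) / 2 ^ ℓ) := by
          rw [← Finset.mul_sum, Finset.sum_sub_distrib, Finset.sum_const, ← Finset.mul_sum]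
          have hcard : ((univ : Finset (Fin ℓ → Bool)).card : ℝ) = 2 ^ ℓ := by
            simp [Finset.card_univ]
          rw [nsmul_eq_mul, hcard]
          field_simp
      _ ≤ δ + β := by
          have hcompB := comp_bound f g hf0 hg0 (Real.exp_pos (-ε)).le
            (Real.exp_le_exp.mpr (by linarith : -ε ≤ ε)) (hfool x)
          rw [hfiber _ (Real.exp_pos (-ε)).le] at hcompB
          set D : ℝ := ∑ y, min (R x y) (Real.exp (-ε) * ρ y) with hDdef
          obtain ⟨hB1, hB2⟩ := abs_le.mp hcompB
          have hfin : 1 - Real.exp ε * D ≤ δ := by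
            have hEmin : ∀ y, Real.exp ε * min (R x y) (Real.exp (-ε) * ρ y)
                = min (Real.exp ε * R x y) (ρ y) := by
              intro y
              rw [mul_min_of_nonneg _ _ (Real.exp_pos ε).le, ← mul_assoc, hEinv, one_mul]
            have h1 : 1 - Real.exp ε * D
                = ∑ y, (ρ y - min (Real.exp ε * R x y) (ρ y)) := by
              rw [Finset.sum_sub_distrib, hρ1, hDdef, Finset.mul_sum]
              congr 1
              exact Finset.sum_congr rfl fun y _ => hEmin y
            have h2 : ∀ y, ρ y - min (Real.exp ε * R x y) (ρ y)
                = max (ρ y - Real.exp ε * R x y) 0 := by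
              intro y
              rcases le_total (Real.exp ε * R x y) (ρ y) with h | h
              · rw [min_eq_left h, max_eq_left (by linarith)]
              · rw [min_eq_right h, max_eq_right (by linarith)]; ring
            rw [h1, Finset.sum_congr rfl fun y _ => h2 y]
            exact hDP2
          have h5 : Real.exp ε * (D - Real.exp (-ε) * β) = Real.exp ε * D - β := by
            rw [mul_sub, ← mul_assoc, hEinv, one_mul]
          have h6 : D - Real.exp (-ε) * β
              ≤ (∑ s : Fin ℓ → Bool, min (f s) (Real.exp (-ε))) / 2 ^ ℓ := by linarith
          have h7 := mul_le_mul_of_nonneg_left h6 (Real.exp_pos ε).le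
          linarith
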